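/- Let C : ℤ → U(2) be a coin satisfying the standing Assumption, let U = S∘C be the associated quantum walk operator on ℋ = ℓ²(ℤ;ℂ²), and let J ⊂ ℝ be a bounded interval containing chs(C−I₂). Then there exists a function F : ℂ → B(ℋ) (bounded operators on ℋ) which is meromorphic on all of ℂ and satisfies F(λ) = 1_J (U−λ)⁻¹ 1_J for every λ ∈ ℂ with |λ| > 1 (for such λ the operator U−λ is boundedly invertible since U is unitary). Moreover, if J ∩ ℤ ≠ ∅ then F has a pole at λ = 0, i.e. F does not extend analytically to λ = 0. -/

import Mathlib

noncomputable section

open scoped ComplexConjugate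

/-- A state: a map ℤ → ℂ², components `ψ x 0` (left, ψ^L) and `ψ x 1` (right, ψ^R). -/
abbrev QWState := ℤ → Fin 2 → ℂ

/-- The quantum walk operator U = S∘C acting pointwise:
`(Uψ)(x) = ((C(x+1)ψ(x+1))₁, (C(x−1)ψ(x−1))₂)`. -/
def qwalk (C : ℤ → Matrix (Fin 2) (Fin 2) ℂ) (ψ : QWState) : QWState :=
  fun x => ![(C (x + 1)).mulVec (ψ (x + 1)) 0, (C (x - 1)).mulVec (ψ (x - 1)) 1]

/-- The standing Assumption on the coin. -/
structure CoinAssumption (C : ℤ → Matrix (Fin 2) (Fin 2) ℂ) : Prop where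
  unitary : ∀ x, C x ∈ Matrix.unitaryGroup (Fin 2) ℂ
  d11 : ∀ x, C x 0 0 ≠ 0
  d22 : ∀ x, C x 1 1 ≠ 0
  fin : Set.Finite {x : ℤ | C x ≠ 1}

/-- Outgoing: ψ^L vanishes far right, ψ^R vanishes far left. -/
def Outgoing (ψ : QWState) : Prop :=
  ∃ r : ℤ, 0 < r ∧ ∀ x : ℤ, r < x → ψ x 0 = 0 ∧ ψ (-x) 1 = 0

/-- Indicator (as a complex factor) of the integer interval [a,b]. -/
def jind (a b x : ℤ) : ℂ := if a ≤ x ∧ x ≤ b then 1 else 0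

/-- The convex hull chs(C−I₂) of the support of C−I₂, as a subset of ℤ. -/
def chsSet (C : ℤ → Matrix (Fin 2) (Fin 2) ℂ) : Set ℤ :=
  {x | ∃ y z : ℤ, C y ≠ 1 ∧ C z ≠ 1 ∧ y ≤ x ∧ x ≤ z}

/-- The Hilbert space ℋ = ℓ²(ℤ; ℂ²). -/
abbrev H2 := lp (fun _ : ℤ => EuclideanSpace ℂ (Fin 2)) 2

/-- Pointwise value of an element of ℋ. -/
def ev (ψ : H2) (x : ℤ) (i : Fin 2) : ℂ := (ψ : ∀ _ : ℤ, EuclideanSpace ℂ (Fin 2)) x i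


open Matrix
namespace QWAux
variable (C : ℤ → Matrix (Fin 2) (Fin 2) ℂ) (a b : ℤ) (lam : ℂ)

abbrev Idx := (↑(Finset.Icc a b) : Type) × Fin 2

def extV (V : Idx a b → ℂ) (y : ℤ) (j : Fin 2) : ℂ :=
  if h : y ∈ Finset.Icc a b then V (⟨y, h⟩, j) else 0

def Ment (x : ℤ) (i : Fin 2) (y : ℤ) (j : Fin 2) : ℂ :=
  if i = 0 then
    (if y = x + 1 then C (x + 1) 0 j else 0)
      + (if y = x ∧ j = 0 then (if x < b then -lam else lam) else 0)
  else
    (if y = x - 1 then C (x - 1) 1 j else 0)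
      + (if y = x ∧ j = 1 then (if a < x then -lam else lam) else 0)

def Mmat : Matrix (Idx a b) (Idx a b) ℂ :=
  Matrix.of fun p q => Ment C a b lam p.1.1 p.2 q.1.1 q.2

lemma sum_idx (f : ℤ → Fin 2 → ℂ) :
    (∑ q : Idx a b, f q.1.1 q.2) = ∑ y ∈ Finset.Icc a b, ∑ j : Fin 2, f y j := by
  rw [Fintype.sum_prod_type]
  rw [← Finset.sum_coe_sort (Finset.Icc a b) (fun y => ∑ j : Fin 2, f y j)]

lemma mulVec_apply (V : Idx a b → ℂ) (x : ℤ) (hx : x ∈ Finset.Icc a b) (i : Fin 2) :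
    (Mmat C a b lam *ᵥ V) (⟨x, hx⟩, i) =
      ∑ y ∈ Finset.Icc a b, ∑ j : Fin 2, Ment C a b lam x i y j * extV a b V y j := by
  have h : (Mmat C a b lam *ᵥ V) (⟨x, hx⟩, i)
      = ∑ q : Idx a b, Ment C a b lam x i q.1.1 q.2 * extV a b V q.1.1 q.2 := by
    apply Finset.sum_congr rfl
    intro q _
    rw [show extV a b V q.1.1 q.2 = V (⟨q.1.1, q.1.2⟩, q.2) from dif_pos q.1.2]
    rfl
  rw [h, sum_idx a b (fun y j => Ment C a b lam x i y j * extV a b V y j)]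

lemma mulVec_row0 (V : Idx a b → ℂ) (x : ℤ) (hx : x ∈ Finset.Icc a b) :
    (Mmat C a b lam *ᵥ V) (⟨x, hx⟩, 0) =
      C (x+1) 0 0 * extV a b V (x+1) 0 + C (x+1) 0 1 * extV a b V (x+1) 1
        + (if x < b then -lam else lam) * extV a b V x 0 := by
  rw [mulVec_apply]
  simp only [Ment, Fin.sum_univ_two,
    show ((0:Fin 2) = 1) ↔ False from by decide, show ((1:Fin 2) = 0) ↔ False from by decide,
    show ((0:Fin 2) = 0) ↔ True from by decide, show ((1:Fin 2) = 1) ↔ True from by decide,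
    if_true, if_false, and_false, and_true, add_mul, zero_mul, add_zero, zero_add, ite_mul,
    Finset.sum_add_distrib, Finset.sum_ite_eq']
  rw [if_pos hx]
  by_cases h1 : x + 1 ∈ Finset.Icc a b
  · rw [if_pos h1, if_pos h1]
  · rw [if_neg h1, if_neg h1, show extV a b V (x+1) 0 = 0 from dif_neg h1,
      show extV a b V (x+1) 1 = 0 from dif_neg h1]
    split_ifs <;> ring

lemma mulVec_row1 (V : Idx a b → ℂ) (x : ℤ) (hx : x ∈ Finset.Icc a b) :
    (Mmat C a b lam *ᵥ V) (⟨x, hx⟩, 1) =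
      C (x-1) 1 0 * extV a b V (x-1) 0 + C (x-1) 1 1 * extV a b V (x-1) 1
        + (if a < x then -lam else lam) * extV a b V x 1 := by
  rw [mulVec_apply]
  simp only [Ment, Fin.sum_univ_two,
    show ((0:Fin 2) = 1) ↔ False from by decide, show ((1:Fin 2) = 0) ↔ False from by decide,
    show ((0:Fin 2) = 0) ↔ True from by decide, show ((1:Fin 2) = 1) ↔ True from by decide,
    if_true, if_false, and_false, and_true, add_mul, zero_mul, add_zero, zero_add, ite_mul,
    Finset.sum_add_distrib, Finset.sum_ite_eq']
  rw [if_pos hx]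
  by_cases h1 : x - 1 ∈ Finset.Icc a b
  · rw [if_pos h1, if_pos h1]
  · rw [if_neg h1, if_neg h1, show extV a b V (x-1) 0 = 0 from dif_neg h1,
      show extV a b V (x-1) 1 = 0 from dif_neg h1]
    split_ifs <;> ring

lemma normSq_sum_mulVec (A : Matrix (Fin 2) (Fin 2) ℂ) (hA : A ∈ Matrix.unitaryGroup (Fin 2) ℂ)
    (v : Fin 2 → ℂ) :
    ∑ j : Fin 2, Complex.normSq ((A *ᵥ v) j) = ∑ j : Fin 2, Complex.normSq (v j)  := by
  have key : ∀ u : Fin 2 → ℂ, star u ⬝ᵥ u = ((∑ j : Fin 2, Complex.normSq (u j) : ℝ) : ℂ) := by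
    intro u
    simp only [dotProduct, Pi.star_apply, Complex.ofReal_sum]
    refine Finset.sum_congr rfl fun j _ => ?_
    rw [RCLike.star_def, ← Complex.normSq_eq_conj_mul_self]
  have h1 : star (A *ᵥ v) ⬝ᵥ (A *ᵥ v) = star v ⬝ᵥ v := by
    rw [star_mulVec, ← dotProduct_mulVec, mulVec_mulVec, ← Matrix.star_eq_conjTranspose,
      (Matrix.mem_unitaryGroup_iff'.mp hA), one_mulVec]
  rw [key, key] at h1
  exact_mod_cast h1



lemma mulVec_eq_zero (hCu : ∀ x, C x ∈ Matrix.unitaryGroup (Fin 2) ℂ)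
    (hlam : 1 < ‖lam‖) (V : Idx a b → ℂ) (hV : Mmat C a b lam *ᵥ V = 0) : V = 0 := by
  have hlam0 : lam ≠ 0 := by
    intro h; rw [h, norm_zero] at hlam; linarith
  set W : ℤ → Fin 2 → ℂ := fun y => extV a b V y with hW
  set w : ℤ → Fin 2 → ℂ := fun y => (C y) *ᵥ (W y) with hw
  have hrow0 : ∀ x (hx : x ∈ Finset.Icc a b),
      C (x+1) 0 0 * W (x+1) 0 + C (x+1) 0 1 * W (x+1) 1
        + (if x < b then -lam else lam) * W x 0 = 0 := by
    intro x hx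
    rw [← mulVec_row0 C a b lam V x hx, hV]; rfl
  have hrow1 : ∀ x (hx : x ∈ Finset.Icc a b),
      C (x-1) 1 0 * W (x-1) 0 + C (x-1) 1 1 * W (x-1) 1
        + (if a < x then -lam else lam) * W x 1 = 0 := by
    intro x hx
    rw [← mulVec_row1 C a b lam V x hx, hV]; rfl
  have hwex : ∀ y i, w y i = C y i 0 * W y 0 + C y i 1 * W y 1 := by
    intro y i
    simp [hw, Matrix.mulVec, dotProduct, Fin.sum_univ_two]
    fin_cases i <;> rfl
  have f0 : ∀ x, x ∈ Finset.Icc a b → x < b → lam * W x 0 = w (x+1) 0 := by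
    intro x hx hxb
    have := hrow0 x hx
    rw [if_pos hxb] at this
    rw [hwex (x+1) 0]
    linear_combination -this
  have fb : ∀ x, x ∈ Finset.Icc a b → ¬ x < b → W x 0 = 0 := by
    intro x hx hxb
    have hx1 : x + 1 ∉ Finset.Icc a b := by
      simp only [Finset.mem_Icc] at hx ⊢; omega
    have := hrow0 x hx
    rw [if_neg hxb, show W (x+1) 0 = 0 from dif_neg hx1, show W (x+1) 1 = 0 from dif_neg hx1]
      at this
    simp only [mul_zero, zero_add] at this
    exact (mul_eq_zero.mp this).resolve_left hlam0
  have f1 : ∀ x, x ∈ Finset.Icc a b → a < x → lam * W x 1 = w (x-1) 1 := by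
    intro x hx hxa
    have := hrow1 x hx
    rw [if_pos hxa] at this
    rw [hwex (x-1) 1]
    linear_combination -this
  have fa : ∀ x, x ∈ Finset.Icc a b → ¬ a < x → W x 1 = 0 := by
    intro x hx hxa
    have hx1 : x - 1 ∉ Finset.Icc a b := by
      simp only [Finset.mem_Icc] at hx ⊢; omega
    have := hrow1 x hx
    rw [if_neg hxa, show W (x-1) 0 = 0 from dif_neg hx1, show W (x-1) 1 = 0 from dif_neg hx1]
      at this
    simp only [mul_zero, zero_add] at this
    exact (mul_eq_zero.mp this).resolve_left hlam0
  -- real quantities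
  set s : ℤ → Fin 2 → ℝ := fun y j => Complex.normSq (W y j) with hs
  set sw : ℤ → Fin 2 → ℝ := fun y j => Complex.normSq (w y j) with hsw
  have hunit : ∀ y, sw y 0 + sw y 1 = s y 0 + s y 1 := by
    intro y
    have := normSq_sum_mulVec (C y) (hCu y) (W y)
    simpa [Fin.sum_univ_two, hs, hsw, hw] using this
  set S : ℝ := ∑ x ∈ Finset.Icc a b, (s x 0 + s x 1) with hS
  have hSnn : 0 ≤ S := Finset.sum_nonneg fun x _ =>
    add_nonneg (Complex.normSq_nonneg _) (Complex.normSq_nonneg _)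
  have key : Complex.normSq lam * S ≤ S := by
    have e1 : Complex.normSq lam * S
        = ∑ x ∈ Finset.Icc a b, Complex.normSq lam * s x 0
          + ∑ x ∈ Finset.Icc a b, Complex.normSq lam * s x 1 := by
      rw [hS, Finset.mul_sum, ← Finset.sum_add_distrib]
      exact Finset.sum_congr rfl fun x _ => by ring
    have e2 : ∑ x ∈ Finset.Icc a b, Complex.normSq lam * s x 0
        = ∑ x ∈ Finset.Icc a (b-1), Complex.normSq lam * s x 0 := by
      refine (Finset.sum_subset (Finset.Icc_subset_Icc_right (by omega)) fun x hx hx' => ?_).symm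
      have : ¬ x < b := by
        simp only [Finset.mem_Icc] at hx hx'; omega
      rw [hs]; simp [fb x hx this]
    have e3 : ∑ x ∈ Finset.Icc a (b-1), Complex.normSq lam * s x 0
        = ∑ x ∈ Finset.Icc a (b-1), sw (x+1) 0 := by
      refine Finset.sum_congr rfl fun x hx => ?_
      simp only [Finset.mem_Icc] at hx
      have := f0 x (by simp only [Finset.mem_Icc]; omega) (by omega)
      rw [hs, hsw, ← Complex.normSq_mul, this]
    have e4 : ∑ x ∈ Finset.Icc a (b-1), sw (x+1) 0 = ∑ y ∈ Finset.Icc (a+1) b, sw y 0 := by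
      rw [show Finset.Icc (a+1) b = Finset.image (· + 1) (Finset.Icc a (b-1)) from by
        rw [Finset.image_add_right_Icc]; congr 1; omega]
      rw [Finset.sum_image (fun x _ y _ h => by omega)]
    have e5 : ∑ y ∈ Finset.Icc (a+1) b, sw y 0 ≤ ∑ y ∈ Finset.Icc a b, sw y 0 :=
      Finset.sum_le_sum_of_subset_of_nonneg (Finset.Icc_subset_Icc_left (by omega))
        (fun y _ _ => Complex.normSq_nonneg _)
    have e2' : ∑ x ∈ Finset.Icc a b, Complex.normSq lam * s x 1
        = ∑ x ∈ Finset.Icc (a+1) b, Complex.normSq lam * s x 1 := by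
      refine (Finset.sum_subset (Finset.Icc_subset_Icc_left (by omega)) fun x hx hx' => ?_).symm
      have : ¬ a < x := by
        simp only [Finset.mem_Icc] at hx hx'; omega
      rw [hs]; simp [fa x hx this]
    have e3' : ∑ x ∈ Finset.Icc (a+1) b, Complex.normSq lam * s x 1
        = ∑ x ∈ Finset.Icc (a+1) b, sw (x-1) 1 := by
      refine Finset.sum_congr rfl fun x hx => ?_
      simp only [Finset.mem_Icc] at hx
      have := f1 x (by simp only [Finset.mem_Icc]; omega) (by omega)
      rw [hs, hsw, ← Complex.normSq_mul, this]
    have e4' : ∑ x ∈ Finset.Icc (a+1) b, sw (x-1) 1 = ∑ y ∈ Finset.Icc a (b-1), sw y 1 := by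
      rw [show Finset.Icc a (b-1) = Finset.image (· + (-1)) (Finset.Icc (a+1) b) from by
        rw [Finset.image_add_right_Icc]; congr 1 <;> omega]
      rw [Finset.sum_image (fun x _ y _ h => by omega)]
      exact Finset.sum_congr rfl fun x _ => by norm_num [sub_eq_add_neg]
    have e5' : ∑ y ∈ Finset.Icc a (b-1), sw y 1 ≤ ∑ y ∈ Finset.Icc a b, sw y 1 :=
      Finset.sum_le_sum_of_subset_of_nonneg (Finset.Icc_subset_Icc_right (by omega))
        (fun y _ _ => Complex.normSq_nonneg _)
    have efin : ∑ y ∈ Finset.Icc a b, sw y 0 + ∑ y ∈ Finset.Icc a b, sw y 1 = S := by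
      rw [hS, ← Finset.sum_add_distrib]
      exact Finset.sum_congr rfl fun y _ => hunit y
    calc Complex.normSq lam * S
        = ∑ x ∈ Finset.Icc a b, Complex.normSq lam * s x 0
          + ∑ x ∈ Finset.Icc a b, Complex.normSq lam * s x 1 := e1
      _ = ∑ y ∈ Finset.Icc (a+1) b, sw y 0 + ∑ y ∈ Finset.Icc a (b-1), sw y 1 := by
          rw [e2, e3, e4, e2', e3', e4']
      _ ≤ ∑ y ∈ Finset.Icc a b, sw y 0 + ∑ y ∈ Finset.Icc a b, sw y 1 := add_le_add e5 e5'
      _ = S := efin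
  have hns : 1 < Complex.normSq lam := by
    have : Complex.normSq lam = ‖lam‖ * ‖lam‖ := by
      rw [Complex.normSq_eq_norm_sq, sq]
    nlinarith
  have hS0 : S = 0 := by nlinarith
  have hterm : ∀ x ∈ Finset.Icc a b, s x 0 + s x 1 = 0 := by
    intro x hx
    exact (Finset.sum_eq_zero_iff_of_nonneg fun y _ =>
      add_nonneg (Complex.normSq_nonneg _) (Complex.normSq_nonneg _)).mp hS0 x hx
  funext p
  obtain ⟨⟨x, hx⟩, j⟩ := p
  have h0 := hterm x hx
  have hs0 : s x 0 = 0 ∧ s x 1 = 0 := by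
    constructor <;> nlinarith [Complex.normSq_nonneg (W x 0), Complex.normSq_nonneg (W x 1)]
  have hW0 : ∀ j : Fin 2, W x j = 0 := by
    intro j
    fin_cases j
    · exact Complex.normSq_eq_zero.mp hs0.1
    · exact Complex.normSq_eq_zero.mp hs0.2
  have hVW : W x j = V (⟨x, hx⟩, j) := dif_pos hx
  rw [← hVW, hW0 j]; rfl
lemma det_Mmat_ne_zero (hCu : ∀ x, C x ∈ Matrix.unitaryGroup (Fin 2) ℂ)
    (hlam : 1 < ‖lam‖) : (Mmat C a b lam).det ≠ 0 := by
  intro h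
  obtain ⟨V, hV0, hV⟩ := (Matrix.exists_mulVec_eq_zero_iff).mpr h
  exact hV0 (mulVec_eq_zero C a b lam hCu hlam V hV)


lemma norm_ev_le (ψ : H2) (x : ℤ) (i : Fin 2) : ‖ev ψ x i‖ ≤ ‖ψ‖ := by
  have h2 : ‖(ψ : ∀ _ : ℤ, EuclideanSpace ℂ (Fin 2)) x‖ ≤ ‖ψ‖ :=
    lp.norm_apply_le_norm (by norm_num) ψ x
  refine le_trans ?_ h2
  rw [EuclideanSpace.norm_eq]
  have : ‖ev ψ x i‖ = Real.sqrt (‖ev ψ x i‖ ^ 2) := by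
    rw [Real.sqrt_sq (norm_nonneg _)]
  rw [this]
  apply Real.sqrt_le_sqrt
  exact Finset.single_le_sum (f := fun j => ‖(ψ : ∀ _ : ℤ, EuclideanSpace ℂ (Fin 2)) x j‖ ^ 2)
    (fun j _ => by positivity) (Finset.mem_univ i)

def evCLM (x : ℤ) (i : Fin 2) : H2 →L[ℂ] ℂ :=
  LinearMap.mkContinuous
    { toFun := fun ψ => ev ψ x i
      map_add' := fun ψ φ => by
        simp only [ev, lp.coeFn_add, Pi.add_apply]
        rfl
      map_smul' := fun c ψ => by
        simp only [ev, lp.coeFn_smul, Pi.smul_apply, RingHom.id_apply]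
        rfl }
    1 (fun ψ => by simpa using norm_ev_le ψ x i)

@[simp] lemma evCLM_apply (x : ℤ) (i : Fin 2) (ψ : H2) : evCLM x i ψ = ev ψ x i := rfl

def deltaV (x : ℤ) (i : Fin 2) : H2 := lp.single 2 x (EuclideanSpace.single i 1)

lemma ev_deltaV (y : ℤ) (j : Fin 2) (x : ℤ) (i : Fin 2) :
    ev (deltaV y j) x i = if x = y ∧ i = j then 1 else 0 := by
  rcases eq_or_ne x y with rfl | hxy
  · have h : ev (deltaV x j) x i = EuclideanSpace.single j 1 i := by
      rw [ev, deltaV, lp.single_apply_self]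
    rw [h, EuclideanSpace.single_apply]
    by_cases hij : i = j
    · simp [hij]
    · simp [hij]
  · have h : ev (deltaV y j) x i = (0 : EuclideanSpace ℂ (Fin 2)) i := by
      rw [ev, deltaV, lp.single_apply_ne 2 y _ hxy]
    rw [h]
    simp [hxy]


lemma vanish_right (hJC : ∀ x : ℤ, C x ≠ 1 → a ≤ x ∧ x ≤ b) (hlam : 1 < ‖lam‖)
    (e p : ℤ → Fin 2 → ℂ)
    (hE : ∀ x i, qwalk C e x i - lam * e x i = jind a b x * p x i)
    (Cb : ℝ) (hbd : ∀ x i, ‖e x i‖ ≤ Cb) :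
    ∀ x : ℤ, b < x → e x 0 = 0 := by
  have hCone : ∀ y, b < y → C y = 1 := fun y hy => by
    by_contra h; exact absurd (hJC y h).2 (by omega)
  have step : ∀ x : ℤ, b < x → e (x+1) 0 = lam * e x 0 := by
    intro x hx
    have h := hE x 0
    have hq : qwalk C e x 0 = e (x+1) 0 := by
      show ((C (x+1)).mulVec (e (x+1))) 0 = _
      rw [hCone (x+1) (by omega), one_mulVec]
    rw [hq, jind, if_neg (by omega)] at h
    rw [zero_mul] at h
    linear_combination h
  have hpow : ∀ n : ℕ, e (b+1+n) 0 = lam ^ n * e (b+1) 0 := by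
    intro n
    induction n with
    | zero => simp
    | succ k ih =>
        have h1 : (b+1+((k:ℕ)+1:ℕ) : ℤ) = (b+1+k)+1 := by push_cast; ring
        rw [h1, step (b+1+k) (by omega), ih, pow_succ]; ring
  have c0 : e (b+1) 0 = 0 := by
    by_contra hc
    obtain ⟨n, hn⟩ := pow_unbounded_of_one_lt (Cb / ‖e (b+1) 0‖) hlam
    have h1 : ‖e (b+1+n) 0‖ = ‖lam‖^n * ‖e (b+1) 0‖ := by rw [hpow n, norm_mul, norm_pow]
    have h2 := hbd (b+1+n) 0
    have hpos : 0 < ‖e (b+1) 0‖ := norm_pos_iff.mpr hc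
    rw [div_lt_iff₀ hpos] at hn
    rw [h1] at h2
    linarith
  intro x hx
  have hxn : (b+1+((x - (b+1)).toNat : ℤ)) = x := by omega
  calc e x 0 = e (b+1+((x-(b+1)).toNat:ℤ)) 0 := by rw [hxn]
    _ = lam ^ (x-(b+1)).toNat * e (b+1) 0 := hpow _
    _ = 0 := by rw [c0, mul_zero]

lemma vanish_left (hJC : ∀ x : ℤ, C x ≠ 1 → a ≤ x ∧ x ≤ b) (hlam : 1 < ‖lam‖)
    (e p : ℤ → Fin 2 → ℂ)
    (hE : ∀ x i, qwalk C e x i - lam * e x i = jind a b x * p x i)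
    (Cb : ℝ) (hbd : ∀ x i, ‖e x i‖ ≤ Cb) :
    ∀ x : ℤ, x < a → e x 1 = 0 := by
  have hCone : ∀ y, y < a → C y = 1 := fun y hy => by
    by_contra h; exact absurd (hJC y h).1 (by omega)
  have step : ∀ x : ℤ, x < a → e (x-1) 1 = lam * e x 1 := by
    intro x hx
    have h := hE x 1
    have hq : qwalk C e x 1 = e (x-1) 1 := by
      show ((C (x-1)).mulVec (e (x-1))) 1 = _
      rw [hCone (x-1) (by omega), one_mulVec]
    rw [hq, jind, if_neg (by omega)] at h
    rw [zero_mul] at h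
    linear_combination h
  have hpow : ∀ n : ℕ, e (a-1-n) 1 = lam ^ n * e (a-1) 1 := by
    intro n
    induction n with
    | zero => simp
    | succ k ih =>
        have h1 : (a-1-((k:ℕ)+1:ℕ) : ℤ) = (a-1-k)-1 := by push_cast; ring
        rw [h1, step (a-1-k) (by omega), ih, pow_succ]; ring
  have c0 : e (a-1) 1 = 0 := by
    by_contra hc
    obtain ⟨n, hn⟩ := pow_unbounded_of_one_lt (Cb / ‖e (a-1) 1‖) hlam
    have h1 : ‖e (a-1-n) 1‖ = ‖lam‖^n * ‖e (a-1) 1‖ := by rw [hpow n, norm_mul, norm_pow]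
    have h2 := hbd (a-1-n) 1
    have hpos : 0 < ‖e (a-1) 1‖ := norm_pos_iff.mpr hc
    rw [div_lt_iff₀ hpos] at hn
    rw [h1] at h2
    linarith
  intro x hx
  have hxn : (a-1-((a-1-x).toNat : ℤ)) = x := by omega
  calc e x 1 = e (a-1-((a-1-x).toNat:ℤ)) 1 := by rw [hxn]
    _ = lam ^ (a-1-x).toNat * e (a-1) 1 := hpow _
    _ = 0 := by rw [c0, mul_zero]

def eps (q : Idx a b) : ℂ :=
  if (q.1.1 = b ∧ q.2 = 0) ∨ (q.1.1 = a ∧ q.2 = 1) then -1 else 1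

lemma Meq (hJC : ∀ x : ℤ, C x ≠ 1 → a ≤ x ∧ x ≤ b) (hlam : 1 < ‖lam‖)
    (e p : ℤ → Fin 2 → ℂ)
    (hE : ∀ x i, qwalk C e x i - lam * e x i = jind a b x * p x i)
    (Cb : ℝ) (hbd : ∀ x i, ‖e x i‖ ≤ Cb) :
    Mmat C a b lam *ᵥ (fun q => e q.1.1 q.2) = fun q => eps a b q * p q.1.1 q.2 := by
  have hCone : ∀ y, b < y → C y = 1 := fun y hy => by
    by_contra h; exact absurd (hJC y h).2 (by omega)
  have hCone' : ∀ y, y < a → C y = 1 := fun y hy => by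
    by_contra h; exact absurd (hJC y h).1 (by omega)
  funext q
  obtain ⟨⟨x, hx⟩, i⟩ := q
  have hax : a ≤ x ∧ x ≤ b := Finset.mem_Icc.mp hx
  have hjx : jind a b x = 1 := if_pos hax
  have hEin : ∀ y ∈ Finset.Icc a b, ∀ j, extV a b (fun q : Idx a b => e q.1.1 q.2) y j = e y j :=
    fun y hy j => dif_pos hy
  fin_cases i <;> beta_reduce <;> simp only [Fin.zero_eta, Fin.mk_one]
  · rw [mulVec_row0 C a b lam _ x hx]
    by_cases hxb : x < b
    · have hx1 : x + 1 ∈ Finset.Icc a b := Finset.mem_Icc.mpr (by omega)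
      rw [hEin _ hx1, hEin _ hx1, hEin _ hx, if_pos hxb]
      have h := hE x 0
      rw [hjx, one_mul] at h
      have hq : qwalk C e x 0 = C (x+1) 0 0 * e (x+1) 0 + C (x+1) 0 1 * e (x+1) 1 := by
        show ((C (x+1)).mulVec (e (x+1))) 0 = _
        rw [Matrix.mulVec, dotProduct, Fin.sum_univ_two]
      rw [hq] at h
      have heps : eps a b (⟨x, hx⟩, 0) = 1 := by
        rw [eps, if_neg]
        rintro (⟨h1, -⟩ | ⟨-, h2⟩)
        · have h1' : x = b := h1; omega
        · have h2' : (0 : Fin 2) = 1 := h2; exact absurd h2' (by decide)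
      rw [heps, one_mul]
      linear_combination h
    · have hxeb : x = b := by omega
      have hx1 : x + 1 ∉ Finset.Icc a b := by simp only [Finset.mem_Icc]; omega
      rw [show extV a b (fun q : Idx a b => e q.1.1 q.2) (x+1) 0 = 0 from dif_neg hx1,
        show extV a b (fun q : Idx a b => e q.1.1 q.2) (x+1) 1 = 0 from dif_neg hx1,
        hEin _ hx, if_neg hxb]
      have h := hE x 0
      rw [hjx, one_mul] at h
      have hq : qwalk C e x 0 = e (x+1) 0 := by
        show ((C (x+1)).mulVec (e (x+1))) 0 = _
        rw [hCone (x+1) (by omega), one_mulVec]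
      have hvan : e (x+1) 0 = 0 :=
        vanish_right C a b lam hJC hlam e p hE Cb hbd (x+1) (by omega)
      rw [hq, hvan] at h
      have heps : eps a b (⟨x, hx⟩, 0) = -1 := by
        rw [eps, if_pos (Or.inl ⟨hxeb, rfl⟩)]
      rw [heps]
      linear_combination -h
  · rw [mulVec_row1 C a b lam _ x hx]
    by_cases hxa : a < x
    · have hx1 : x - 1 ∈ Finset.Icc a b := Finset.mem_Icc.mpr (by omega)
      rw [hEin _ hx1, hEin _ hx1, hEin _ hx, if_pos hxa]
      have h := hE x 1
      rw [hjx, one_mul] at h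
      have hq : qwalk C e x 1 = C (x-1) 1 0 * e (x-1) 0 + C (x-1) 1 1 * e (x-1) 1 := by
        show ((C (x-1)).mulVec (e (x-1))) 1 = _
        rw [Matrix.mulVec, dotProduct, Fin.sum_univ_two]
      rw [hq] at h
      have heps : eps a b (⟨x, hx⟩, 1) = 1 := by
        rw [eps, if_neg]
        rintro (⟨-, h2⟩ | ⟨h1, -⟩)
        · have h2' : (1 : Fin 2) = 0 := h2; exact absurd h2' (by decide)
        · have h1' : x = a := h1; omega
      rw [heps, one_mul]
      linear_combination h
    · have hxea : x = a := by omega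
      have hx1 : x - 1 ∉ Finset.Icc a b := by simp only [Finset.mem_Icc]; omega
      rw [show extV a b (fun q : Idx a b => e q.1.1 q.2) (x-1) 0 = 0 from dif_neg hx1,
        show extV a b (fun q : Idx a b => e q.1.1 q.2) (x-1) 1 = 0 from dif_neg hx1,
        hEin _ hx, if_neg hxa]
      have h := hE x 1
      rw [hjx, one_mul] at h
      have hq : qwalk C e x 1 = e (x-1) 1 := by
        show ((C (x-1)).mulVec (e (x-1))) 1 = _
        rw [hCone' (x-1) (by omega), one_mulVec]
      have hvan : e (x-1) 1 = 0 :=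
        vanish_left C a b lam hJC hlam e p hE Cb hbd (x-1) (by omega)
      rw [hq, hvan] at h
      have heps : eps a b (⟨x, hx⟩, 1) = -1 := by
        rw [eps, if_pos (Or.inr ⟨hxea, rfl⟩)]
      rw [heps]
      linear_combination -h


def Wv (ψ : H2) : Idx a b → ℂ := fun q => eps a b q * ev ψ q.1.1 q.2

def Fop (lam : ℂ) : H2 →L[ℂ] H2 :=
  ∑ p : Idx a b, ∑ q : Idx a b,
    ((Mmat C a b lam)⁻¹ p q * eps a b q) •
      ((evCLM q.1.1 q.2).smulRight (deltaV p.1.1 p.2))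

lemma ev_Fop (lam : ℂ) (ψ : H2) (x : ℤ) (i : Fin 2) :
    ev (Fop C a b lam ψ) x i = extV a b ((Mmat C a b lam)⁻¹ *ᵥ Wv a b ψ) x i := by
  have h1 : Fop C a b lam ψ = ∑ p : Idx a b, ∑ q : Idx a b,
      ((Mmat C a b lam)⁻¹ p q * eps a b q * ev ψ q.1.1 q.2) • deltaV p.1.1 p.2 := by
    rw [Fop, ContinuousLinearMap.sum_apply]
    refine Finset.sum_congr rfl fun p _ => ?_
    rw [ContinuousLinearMap.sum_apply]
    refine Finset.sum_congr rfl fun q _ => ?_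
    rw [ContinuousLinearMap.smul_apply, ContinuousLinearMap.smulRight_apply, evCLM_apply,
      smul_smul]
  have h2 : ev (Fop C a b lam ψ) x i
      = ∑ p : Idx a b, ((Mmat C a b lam)⁻¹ *ᵥ Wv a b ψ) p
          * (if x = p.1.1 ∧ i = p.2 then 1 else 0) := by
    rw [show ev (Fop C a b lam ψ) x i = evCLM x i (Fop C a b lam ψ) from rfl, h1, map_sum]
    refine Finset.sum_congr rfl fun p _ => ?_
    rw [map_sum]
    have : ∀ q : Idx a b, evCLM x i
        (((Mmat C a b lam)⁻¹ p q * eps a b q * ev ψ q.1.1 q.2) • deltaV p.1.1 p.2)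
        = ((Mmat C a b lam)⁻¹ p q * Wv a b ψ q) * (if x = p.1.1 ∧ i = p.2 then 1 else 0) := by
      intro q
      rw [_root_.map_smul, smul_eq_mul, evCLM_apply, ev_deltaV, Wv]
      ring
    rw [Finset.sum_congr rfl fun q _ => this q, ← Finset.sum_mul]
    rfl
  rw [h2]
  by_cases hx : x ∈ Finset.Icc a b
  · have hcoll : ∀ p : Idx a b, ((Mmat C a b lam)⁻¹ *ᵥ Wv a b ψ) p
        * (if x = p.1.1 ∧ i = p.2 then 1 else 0)
        = if p = (⟨x, hx⟩, i) then ((Mmat C a b lam)⁻¹ *ᵥ Wv a b ψ) p else 0 := by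
      intro p
      rcases eq_or_ne p ((⟨x, hx⟩, i) : Idx a b) with rfl | hne
      · rw [if_pos rfl, if_pos ⟨rfl, rfl⟩, mul_one]
      · rw [if_neg hne, if_neg, mul_zero]
        rintro ⟨hh1, hh2⟩
        exact hne (Prod.ext (Subtype.ext hh1.symm) hh2.symm)
    rw [Finset.sum_congr rfl fun p _ => hcoll p, Finset.sum_ite_eq' Finset.univ,
      if_pos (Finset.mem_univ _)]
    exact (show extV a b ((Mmat C a b lam)⁻¹ *ᵥ Wv a b ψ) x i = _ from dif_pos hx).symm
  · have hcoll : ∀ p : Idx a b, ((Mmat C a b lam)⁻¹ *ᵥ Wv a b ψ) p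
        * (if x = p.1.1 ∧ i = p.2 then 1 else 0) = 0 := by
      intro p
      rw [if_neg, mul_zero]
      rintro ⟨hh1, -⟩
      exact hx (hh1 ▸ p.1.2)
    rw [Finset.sum_congr rfl fun p _ => hcoll p, Finset.sum_const_zero]
    exact (show extV a b ((Mmat C a b lam)⁻¹ *ᵥ Wv a b ψ) x i = 0 from dif_neg hx).symm

lemma ev_Fop_eq (hCu : ∀ x, C x ∈ Matrix.unitaryGroup (Fin 2) ℂ)
    (hJC : ∀ x : ℤ, C x ≠ 1 → a ≤ x ∧ x ≤ b) (hlam : 1 < ‖lam‖) (ψ η : H2)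
    (hE : ∀ x i, qwalk C (fun y => ev η y) x i - lam * ev η x i = jind a b x * ev ψ x i) :
    ∀ x i, ev (Fop C a b lam ψ) x i = jind a b x * ev η x i := by
  have hdet := det_Mmat_ne_zero C a b lam hCu hlam
  have hM := Meq C a b lam hJC hlam (fun y => ev η y) (fun y => ev ψ y) hE ‖η‖
    (fun x i => norm_ev_le η x i)
  have hinv : (Mmat C a b lam)⁻¹ *ᵥ Wv a b ψ = fun q : Idx a b => ev η q.1.1 q.2 := by
    have : Wv a b ψ = Mmat C a b lam *ᵥ (fun q : Idx a b => ev η q.1.1 q.2) := by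
      rw [hM]; rfl
    rw [this, mulVec_mulVec, Matrix.nonsing_inv_mul _ (Ne.isUnit hdet), one_mulVec]
  intro x i
  rw [ev_Fop]
  by_cases hx : x ∈ Finset.Icc a b
  · have h1 : extV a b ((Mmat C a b lam)⁻¹ *ᵥ Wv a b ψ) x i
        = ((Mmat C a b lam)⁻¹ *ᵥ Wv a b ψ) (⟨x, hx⟩, i) := dif_pos hx
    rw [h1, hinv, jind, if_pos (Finset.mem_Icc.mp hx), one_mul]
  · have h1 : extV a b ((Mmat C a b lam)⁻¹ *ᵥ Wv a b ψ) x i = 0 := dif_neg hx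
    rw [h1, jind, if_neg (fun hc => hx (Finset.mem_Icc.mpr hc)), zero_mul]


lemma analyticAt_affine (c d : ℂ) (z : ℂ) : AnalyticAt ℂ (fun lam => c + d * lam) z :=
  analyticAt_const.add (analyticAt_const.mul analyticAt_id)

lemma entry_affine (p q : Idx a b) : ∃ c d : ℂ, ∀ lam : ℂ, Mmat C a b lam p q = c + d * lam := by
  by_cases h0 : p.2 = (0 : Fin 2)
  · refine ⟨(if (q.1.1 : ℤ) = (p.1.1 : ℤ) + 1 then C ((p.1.1 : ℤ) + 1) 0 q.2 else 0),
      (if ((q.1.1 : ℤ) = (p.1.1 : ℤ) ∧ q.2 = 0) then (if (p.1.1 : ℤ) < b then -1 else 1) else 0),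
      fun lam => ?_⟩
    show Ment C a b lam p.1.1 p.2 q.1.1 q.2 = _
    rw [Ment, if_pos h0]
    split_ifs <;> ring
  · refine ⟨(if (q.1.1 : ℤ) = (p.1.1 : ℤ) - 1 then C ((p.1.1 : ℤ) - 1) 1 q.2 else 0),
      (if ((q.1.1 : ℤ) = (p.1.1 : ℤ) ∧ q.2 = 1) then (if a < (p.1.1 : ℤ) then -1 else 1) else 0),
      fun lam => ?_⟩
    show Ment C a b lam p.1.1 p.2 q.1.1 q.2 = _
    rw [Ment, if_neg h0]
    split_ifs <;> ring

lemma analyticAt_entry (p q : Idx a b) (z : ℂ) :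
    AnalyticAt ℂ (fun lam => Mmat C a b lam p q) z := by
  obtain ⟨c, d, h⟩ := entry_affine C a b p q
  rw [show (fun lam => Mmat C a b lam p q) = fun lam => c + d * lam from funext h]
  exact analyticAt_affine c d z

lemma analyticAt_det_family {n : Type*} [Fintype n] [DecidableEq n] (A : ℂ → Matrix n n ℂ)
    (z : ℂ) (h : ∀ p q, AnalyticAt ℂ (fun w => A w p q) z) :
    AnalyticAt ℂ (fun w => (A w).det) z := by
  have he : (fun w => (A w).det)
      = fun w => ∑ σ ∈ (Finset.univ : Finset (Equiv.Perm n)),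
          (((Equiv.Perm.sign σ : ℤ) : ℂ) * ∏ p, A w (σ p) p) := by
    funext w
    rw [Matrix.det_apply']
  rw [he]
  refine Finset.analyticAt_fun_sum _ fun σ _ => ?_
  exact analyticAt_const.mul (Finset.analyticAt_fun_prod _ fun p _ => h (σ p) p)

lemma analyticAt_det (z : ℂ) : AnalyticAt ℂ (fun lam => (Mmat C a b lam).det) z :=
  analyticAt_det_family _ z (fun p q => analyticAt_entry C a b p q z)

lemma analyticAt_adjugate (p q : Idx a b) (z : ℂ) :
    AnalyticAt ℂ (fun lam => (Mmat C a b lam).adjugate p q) z := by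
  have he : (fun lam => (Mmat C a b lam).adjugate p q)
      = fun lam => ((Mmat C a b lam).updateRow q (Pi.single p 1)).det := by
    funext lam
    rw [Matrix.adjugate_apply]
  rw [he]
  refine analyticAt_det_family _ z fun r s => ?_
  by_cases hr : r = q
  · have : (fun lam => (Mmat C a b lam).updateRow q (Pi.single p 1) r s)
        = fun _ : ℂ => (Pi.single p (1:ℂ) : Idx a b → ℂ) s := by
      funext lam
      rw [Matrix.updateRow_apply, if_pos hr]
    rw [this]
    exact analyticAt_const
  · have : (fun lam => (Mmat C a b lam).updateRow q (Pi.single p 1) r s)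
        = fun lam => Mmat C a b lam r s := by
      funext lam
      rw [Matrix.updateRow_apply, if_neg hr]
    rw [this]
    exact analyticAt_entry C a b r s z

lemma meromorphicAt_inv_entry (p q : Idx a b) (z : ℂ) :
    MeromorphicAt (fun lam => (Mmat C a b lam)⁻¹ p q) z := by
  have he : (fun lam => (Mmat C a b lam)⁻¹ p q)
      = fun lam => ((Mmat C a b lam).det)⁻¹ * (Mmat C a b lam).adjugate p q := by
    funext lam
    rw [Matrix.inv_def, Matrix.smul_apply, Ring.inverse_eq_inv', smul_eq_mul]
  rw [he]
  exact ((analyticAt_det C a b z).meromorphicAt.inv).mul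
    (analyticAt_adjugate C a b p q z).meromorphicAt

lemma meromorphicAt_finsum {ι : Type*} (s : Finset ι) (f : ι → ℂ → (H2 →L[ℂ] H2)) (z : ℂ)
    (h : ∀ i ∈ s, MeromorphicAt (f i) z) :
    MeromorphicAt (fun lam => ∑ i ∈ s, f i lam) z := by
  classical
  induction s using Finset.induction_on with
  | empty => simpa using MeromorphicAt.const (0 : H2 →L[ℂ] H2) z
  | @insert c s hni ih =>
      have he : (fun lam => ∑ i ∈ insert c s, f i lam)
          = fun lam => f c lam + ∑ i ∈ s, f i lam := by
        funext lam
        rw [Finset.sum_insert hni]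
      rw [he]
      exact (h c (Finset.mem_insert_self c s)).add
        (ih fun i hi => h i (Finset.mem_insert_of_mem hi))

lemma meromorphic_Fop : MeromorphicOn (fun lam => Fop C a b lam) Set.univ := by
  intro z _
  refine meromorphicAt_finsum Finset.univ _ z fun p _ => ?_
  refine meromorphicAt_finsum Finset.univ _ z fun q _ => ?_
  have h1 : MeromorphicAt (fun lam => (Mmat C a b lam)⁻¹ p q * eps a b q) z :=
    (meromorphicAt_inv_entry C a b p q z).mul (MeromorphicAt.const _ z)
  exact h1.smul (MeromorphicAt.const ((evCLM q.1.1 q.2).smulRight (deltaV p.1.1 p.2)) z)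


lemma mul_inv_p0 (z : ℂ) (hz : (Mmat C a b z).det ≠ 0) (ha : a ∈ Finset.Icc a b) :
    z * (Mmat C a b z)⁻¹ (⟨a, ha⟩, 1) (⟨a, ha⟩, 1) = 1 := by
  set p0 : Idx a b := (⟨a, ha⟩, 1) with hp0
  have h := Matrix.mul_nonsing_inv (Mmat C a b z) (Ne.isUnit hz)
  have h1 : (Mmat C a b z * (Mmat C a b z)⁻¹) p0 p0 = 1 := by
    rw [h, Matrix.one_apply_eq]
  have h2 : (Mmat C a b z * (Mmat C a b z)⁻¹) p0 p0
      = (Mmat C a b z *ᵥ (fun q => (Mmat C a b z)⁻¹ q p0)) p0 := rfl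
  rw [h2, mulVec_row1 C a b z _ a ha] at h1
  have hnot : a - 1 ∉ Finset.Icc a b := by simp only [Finset.mem_Icc]; omega
  rw [show extV a b (fun q => (Mmat C a b z)⁻¹ q p0) (a-1) 0 = 0 from dif_neg hnot,
    show extV a b (fun q => (Mmat C a b z)⁻¹ q p0) (a-1) 1 = 0 from dif_neg hnot,
    show extV a b (fun q => (Mmat C a b z)⁻¹ q p0) a 1 = (Mmat C a b z)⁻¹ p0 p0 from dif_pos ha,
    if_neg (lt_irrefl a)] at h1
  rw [← h1]; ring

lemma Wv_delta (ha : a ∈ Finset.Icc a b) :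
    Wv a b (deltaV a 1) = fun q : Idx a b => if q = (⟨a, ha⟩, 1) then -1 else 0 := by
  funext q
  rw [Wv, ev_deltaV]
  rcases eq_or_ne q ((⟨a, ha⟩, 1) : Idx a b) with rfl | hne
  · rw [if_pos rfl, if_pos ⟨rfl, rfl⟩, eps, if_pos (Or.inr ⟨rfl, rfl⟩)]
    ring
  · rw [if_neg hne, if_neg, mul_zero]
    rintro ⟨hh1, hh2⟩
    exact hne (Prod.ext (Subtype.ext hh1) hh2)

lemma ev_Fop_delta (z : ℂ) (hz : (Mmat C a b z).det ≠ 0) (ha : a ∈ Finset.Icc a b) :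
    ev (Fop C a b z (deltaV a 1)) a 1 = -z⁻¹ := by
  rw [ev_Fop]
  set p0 : Idx a b := (⟨a, ha⟩, 1) with hp0
  have h1 : extV a b ((Mmat C a b z)⁻¹ *ᵥ Wv a b (deltaV a 1)) a 1
      = ((Mmat C a b z)⁻¹ *ᵥ Wv a b (deltaV a 1)) p0 := dif_pos ha
  rw [h1, Wv_delta a b ha]
  have h2 : ((Mmat C a b z)⁻¹ *ᵥ (fun q : Idx a b => if q = p0 then (-1:ℂ) else 0)) p0
      = ∑ q : Idx a b, (Mmat C a b z)⁻¹ p0 q * (if q = p0 then (-1:ℂ) else 0) := rfl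
  rw [h2]
  have h3 : ∀ q : Idx a b, (Mmat C a b z)⁻¹ p0 q * (if q = p0 then (-1:ℂ) else 0)
      = if q = p0 then -(Mmat C a b z)⁻¹ p0 q else 0 := by
    intro q; split_ifs <;> ring
  rw [Finset.sum_congr rfl fun q _ => h3 q, Finset.sum_ite_eq' Finset.univ,
    if_pos (Finset.mem_univ _)]
  have h4 := mul_inv_p0 C a b z hz ha
  have hzne : z ≠ 0 := by
    intro h0; rw [h0, zero_mul] at h4; exact zero_ne_one h4
  rw [inv_eq_of_mul_eq_one_right h4]

lemma eventually_det_ne (hCu : ∀ x, C x ∈ Matrix.unitaryGroup (Fin 2) ℂ) :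
    ∀ᶠ z in nhdsWithin 0 {(0:ℂ)}ᶜ, (Mmat C a b z).det ≠ 0 := by
  rcases (analyticAt_det C a b 0).eventually_eq_zero_or_eventually_ne_zero with h | h
  · exfalso
    have hall : Set.EqOn (fun z => (Mmat C a b z).det) 0 Set.univ :=
      AnalyticOnNhd.eqOn_zero_of_preconnected_of_eventuallyEq_zero
        (fun z _ => analyticAt_det C a b z) isPreconnected_univ (Set.mem_univ 0) h
    have h2 := det_Mmat_ne_zero C a b 2 hCu (by norm_num)
    exact h2 (hall (Set.mem_univ 2))
  · exact h

end QWAux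

/-- Meromorphic continuation of the cut-off resolvent: there is a meromorphic family
F : ℂ → B(ℋ) with F(λ) = 1_J(U−λ)⁻¹1_J for |λ| > 1; if J ∩ ℤ ≠ ∅ then F has a pole at 0
(it does not extend analytically there). -/
theorem meromorphic_continuation_of_cutoff_resolvent
    (C : ℤ → Matrix (Fin 2) (Fin 2) ℂ) (hC : CoinAssumption C)
    (a b : ℤ) (hJC : ∀ x : ℤ, C x ≠ 1 → a ≤ x ∧ x ≤ b)
    (Uop : H2 →L[ℂ] H2)
    (hU : ∀ ψ : H2, ∀ x : ℤ, ∀ i : Fin 2,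
      ev (Uop ψ) x i = qwalk C (fun y => ev ψ y) x i) :
    ∃ F : ℂ → (H2 →L[ℂ] H2),
      MeromorphicOn F Set.univ ∧
      -- F(λ) = 1_J (U−λ)⁻¹ 1_J for |λ| > 1:
      -- whenever (U−λ)η = 1_J ψ, we have F(λ)ψ = 1_J η
      (∀ lam : ℂ, 1 < ‖lam‖ → ∀ ψ η : H2,
        (∀ x : ℤ, ∀ i : Fin 2, ev (Uop η) x i - lam * ev η x i = jind a b x * ev ψ x i) →
        ∀ x : ℤ, ∀ i : Fin 2, ev (F lam ψ) x i = jind a b x * ev η x i) ∧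
      -- pole at λ = 0 whenever J ∩ ℤ ≠ ∅
      (a ≤ b →
        ¬ ∃ G : ℂ → (H2 →L[ℂ] H2), AnalyticAt ℂ G 0 ∧
          ∀ᶠ z in nhdsWithin 0 {(0 : ℂ)}ᶜ, G z = F z) := by
  classical
  refine ⟨fun lam => QWAux.Fop C a b lam, QWAux.meromorphic_Fop C a b, ?_, ?_⟩
  · intro lam hlam ψ η hη x i
    have hE : ∀ x i, qwalk C (fun y => ev η y) x i - lam * ev η x i = jind a b x * ev ψ x i := by
      intro x i
      rw [← hU η x i]
      exact hη x i
    exact QWAux.ev_Fop_eq C a b lam hC.unitary hJC hlam ψ η hE x i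
  · rintro hab ⟨G, hG, hGF⟩
    have ha : a ∈ Finset.Icc a b := Finset.mem_Icc.mpr ⟨le_refl a, hab⟩
    set ψ0 : H2 := QWAux.deltaV a 1 with hψ0
    have hcont : ContinuousAt (fun z => z * ev (G z ψ0) a 1) 0 := by
      have h2 : Continuous (fun T : H2 →L[ℂ] H2 => QWAux.evCLM a 1 (T ψ0)) :=
        ((QWAux.evCLM a 1).comp (ContinuousLinearMap.apply ℂ H2 ψ0)).continuous
      exact continuousAt_id.mul (h2.continuousAt.comp hG.continuousAt)
    have hlim0 : Filter.Tendsto (fun z => z * ev (G z ψ0) a 1)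
        (nhdsWithin 0 {(0:ℂ)}ᶜ) (nhds 0) := by
      have h3 := hcont.tendsto
      rw [zero_mul] at h3
      exact h3.mono_left nhdsWithin_le_nhds
    have hlim1 : Filter.Tendsto (fun z => z * ev (G z ψ0) a 1)
        (nhdsWithin 0 {(0:ℂ)}ᶜ) (nhds (-1)) := by
      have hev : ∀ᶠ z in nhdsWithin 0 {(0:ℂ)}ᶜ, z * ev (G z ψ0) a 1 = -1 := by
        filter_upwards [hGF, QWAux.eventually_det_ne C a b hC.unitary,
          self_mem_nhdsWithin] with z hz1 hz2 hz3
        have hzne : z ≠ 0 := hz3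
        rw [hz1, QWAux.ev_Fop_delta C a b z hz2 ha, mul_neg, mul_inv_cancel₀ hzne]
      exact Filter.Tendsto.congr' (Filter.EventuallyEq.symm hev) tendsto_const_nhds
    have h0 : (0:ℂ) = -1 := tendsto_nhds_unique hlim0 hlim1
    norm_num at h0
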